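/- arXiv:1804.00130 — 2 statements merged into one kernel-verified Lean document; each statement's English description precedes it below -/
import Mathlib

section
/- Let y = Ax + e with ‖x‖₀ ≤ s₁, and let S ⊆ {1,…,N} with |S| = s₂. Define x̄ by x̄_S = A_S† y and x̄ = 0 off S. If δ_{s₁+s₂} < 1, then ‖x - x̄‖₂ ≤ (1/√(1 - δ_{s₁+s₂}²))‖x_{S^c}‖₂ + (√(1+δ_{s₂})/(1-δ_{s₁+s₂}))‖e‖₂. -/
open Finset

/-- ℓ2 norm of a vector. -/
noncomputable def l2 {n : ℕ} (v : Fin n → ℝ) : ℝ := Real.sqrt (∑ i, v i ^ 2)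

/-- ℓ1 norm of a vector. -/
noncomputable def l1 {n : ℕ} (v : Fin n → ℝ) : ℝ := ∑ i, |v i|

/-- number of nonzero entries (ℓ0 "norm"). -/
noncomputable def spars {n : ℕ} (v : Fin n → ℝ) : ℕ := Set.ncard {i | v i ≠ 0}

/-- restriction of a vector to an index set (zero off the set). -/
def restr {n : ℕ} (S : Finset (Fin n)) (v : Fin n → ℝ) : Fin n → ℝ :=
  fun i => if i ∈ S then v i else 0

lemma l2_nonneg {n : ℕ} (v : Fin n → ℝ) : 0 ≤ l2 v := Real.sqrt_nonneg _

lemma l2_sq {n : ℕ} (v : Fin n → ℝ) : (l2 v) ^ 2 = ∑ i, v i ^ 2 :=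
  Real.sq_sqrt (Finset.sum_nonneg fun i _ => sq_nonneg _)

lemma spars_le_card {n : ℕ} (v : Fin n → ℝ) (T : Finset (Fin n))
    (h : ∀ i, v i ≠ 0 → i ∈ T) : spars v ≤ T.card := by
  have hsub : {i | v i ≠ 0} ⊆ (↑T : Set (Fin n)) := fun i hi => h i hi
  have := Set.ncard_le_ncard hsub T.finite_toSet
  simpa [spars, Set.ncard_coe_finset] using this

lemma sum_comb_sq {n : ℕ} (s t : ℝ) (u v : Fin n → ℝ) :
    ∑ i, (s * u i + t * v i) ^ 2
      = s ^ 2 * (∑ i, u i ^ 2) + 2 * s * t * (∑ i, u i * v i) + t ^ 2 * (∑ i, v i ^ 2) := by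
  rw [Finset.mul_sum, Finset.mul_sum, Finset.mul_sum, ← Finset.sum_add_distrib,
    ← Finset.sum_add_distrib]
  exact Finset.sum_congr rfl fun i _ => by ring

lemma l2_comb_sq {n : ℕ} (s t : ℝ) (u v : Fin n → ℝ) :
    (l2 (fun i => s * u i + t * v i)) ^ 2
      = s ^ 2 * (l2 u) ^ 2 + 2 * s * t * (∑ i, u i * v i) + t ^ 2 * (l2 v) ^ 2 := by
  rw [l2_sq, l2_sq, l2_sq]; exact sum_comb_sq s t u v

lemma mulVec_comb {M N : ℕ} (A : Matrix (Fin M) (Fin N) ℝ) (s t : ℝ) (u v : Fin N → ℝ) :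
    A.mulVec (fun i => s * u i + t * v i) = fun j => s * A.mulVec u j + t * A.mulVec v j := by
  funext j
  simp only [Matrix.mulVec, dotProduct]
  rw [Finset.mul_sum, Finset.mul_sum, ← Finset.sum_add_distrib]
  exact Finset.sum_congr rfl fun i _ => by ring

lemma final_alg (a b c d δ : ℝ) (hδ0 : 0 ≤ δ) (hδ1 : δ < 1) (ha : 0 ≤ a)
    (hb : 0 ≤ b) (hd : 0 ≤ d) (hc : 0 ≤ c) (hc2 : c ^ 2 = a ^ 2 + b ^ 2)
    (hkey : a ≤ δ * c + d) :
    c ≤ (1 / Real.sqrt (1 - δ ^ 2)) * b + d / (1 - δ) := by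
  have h1δ : 0 < 1 - δ := by linarith
  have hs2' : 0 < 1 - δ ^ 2 := by nlinarith
  have hs2 : Real.sqrt (1 - δ ^ 2) ^ 2 = 1 - δ ^ 2 := Real.sq_sqrt hs2'.le
  have hspos : 0 < Real.sqrt (1 - δ ^ 2) := Real.sqrt_pos.mpr hs2'
  set s := Real.sqrt (1 - δ ^ 2) with hsdef
  have key : c * (s * (1 - δ)) ≤ b * (1 - δ) + d * s := by
    rcases le_or_gt ((1 - δ) * c) d with hcase | hcase
    · nlinarith [mul_nonneg hb h1δ.le, mul_le_mul_of_nonneg_left hcase hspos.le]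
    · have hb2 : c ^ 2 - (δ * c + d) ^ 2 ≤ b ^ 2 := by nlinarith
      have hp : 0 < (1 - δ) * c - d := by linarith
      have hsq : (s * ((1 - δ) * c - d)) ^ 2 ≤ ((1 - δ) * b) ^ 2 := by
        have e1 : (s * ((1 - δ) * c - d)) ^ 2 = (1 - δ ^ 2) * ((1 - δ) * c - d) ^ 2 := by
          rw [mul_pow, hs2]
        rw [e1]
        have f1 := mul_le_mul_of_nonneg_left hb2 (sq_nonneg (1 - δ))
        have f2 : 0 ≤ d * ((1 - δ) * c - d) * (1 - δ) :=
          mul_nonneg (mul_nonneg hd hp.le) h1δ.le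
        nlinarith [f1, f2]
      have hle : s * ((1 - δ) * c - d) ≤ (1 - δ) * b := by
        have h1 : 0 ≤ (1 - δ) * b := mul_nonneg h1δ.le hb
        nlinarith [mul_pos hspos hp, hsq, h1]
      nlinarith [hle, hspos.le, hd]
  have hpos : 0 < s * (1 - δ) := mul_pos hspos h1δ
  have key2 : c ≤ (b * (1 - δ) + d * s) / (s * (1 - δ)) := (le_div_iff₀ hpos).mpr key
  have heq : (b * (1 - δ) + d * s) / (s * (1 - δ)) = (1 / s) * b + d / (1 - δ) := by
    field_simp
  rw [heq] at key2; exact key2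

lemma polar_ineq {M N : ℕ} (A : Matrix (Fin M) (Fin N) ℝ) (δ : ℝ)
    (u z : Fin N → ℝ)
    (h1 : (1 - δ) * (l2 (fun i => l2 z * u i + l2 u * z i)) ^ 2
            ≤ (l2 (A.mulVec (fun i => l2 z * u i + l2 u * z i))) ^ 2)
    (h2 : (l2 (A.mulVec (fun i => l2 z * u i + (-(l2 u)) * z i))) ^ 2
            ≤ (1 + δ) * (l2 (fun i => l2 z * u i + (-(l2 u)) * z i)) ^ 2)
    (hu : 0 < l2 u) (hz : 0 < l2 z) :
    (∑ i, u i * z i) - (∑ j, A.mulVec u j * A.mulVec z j) ≤ δ * l2 u * l2 z := by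
  rw [mulVec_comb] at h1 h2
  rw [l2_comb_sq, l2_comb_sq] at h1 h2
  nlinarith [h1, h2, mul_pos hu hz, sq_nonneg (l2 u), sq_nonneg (l2 z)]

theorem stmt3 {M N : ℕ} (A : Matrix (Fin M) (Fin N) ℝ)
    (x : Fin N → ℝ) (e : Fin M → ℝ) (y : Fin M → ℝ)
    (hy : y = A.mulVec x + e)
    (s₁ s₂ : ℕ) (hx : spars x ≤ s₁)
    (S : Finset (Fin N)) (hS : S.card = s₂)
    (xb : Fin N → ℝ)
    -- x̄ is supported on S and x̄_S = A_S† y, characterized by the normal equations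
    (hxbsupp : ∀ i ∉ S, xb i = 0)
    (hxbls : ∀ i ∈ S, ∑ j, A j i * (A.mulVec xb j - y j) = 0)
    (δ₁ δ₂ : ℝ) (hδ₁ : δ₁ < 1)
    (hRIP₁ : ∀ v : Fin N → ℝ, spars v ≤ s₁ + s₂ →
      (1 - δ₁) * (l2 v) ^ 2 ≤ (l2 (A.mulVec v)) ^ 2 ∧
      (l2 (A.mulVec v)) ^ 2 ≤ (1 + δ₁) * (l2 v) ^ 2)
    (hRIP₂ : ∀ v : Fin N → ℝ, spars v ≤ s₂ →
      (1 - δ₂) * (l2 v) ^ 2 ≤ (l2 (A.mulVec v)) ^ 2 ∧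
      (l2 (A.mulVec v)) ^ 2 ≤ (1 + δ₂) * (l2 v) ^ 2) :
    l2 (x - xb) ≤ (1 / Real.sqrt (1 - δ₁ ^ 2)) * l2 (restr Sᶜ x) + (Real.sqrt (1 + δ₂) / (1 - δ₁)) * l2 e := by
  classical
  have h1δ : 0 < 1 - δ₁ := by linarith
  have hRHS0 : 0 ≤ (1 / Real.sqrt (1 - δ₁ ^ 2)) * l2 (restr Sᶜ x)
      + (Real.sqrt (1 + δ₂) / (1 - δ₁)) * l2 e := by
    apply add_nonneg
    · exact mul_nonneg (by positivity) (l2_nonneg _)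
    · exact mul_nonneg (div_nonneg (Real.sqrt_nonneg _) h1δ.le) (l2_nonneg _)
  set z : Fin N → ℝ := x - xb with hzdef
  have hzi : ∀ i, z i = x i - xb i := fun i => rfl
  rcases eq_or_lt_of_le (l2_nonneg z) with hc0 | hcpos
  · rw [← hc0]; exact hRHS0
  -- support sets
  set Tx : Finset (Fin N) := Finset.univ.filter (fun i => x i ≠ 0) with hTxdef
  have hTxcard : Tx.card ≤ s₁ := by
    have hset : {i | x i ≠ 0} = (↑Tx : Set (Fin N)) := by ext i; simp [hTxdef]
    have : spars x = Tx.card := by rw [spars, hset, Set.ncard_coe_finset]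
    omega
  set T : Finset (Fin N) := Tx ∪ S with hTdef
  have hTcard : T.card ≤ s₁ + s₂ :=
    le_trans (Finset.card_union_le _ _) (by omega)
  have hzT : ∀ i, z i ≠ 0 → i ∈ T := by
    intro i hi
    by_contra h'
    rw [hTdef, Finset.mem_union] at h'
    push_neg at h'
    have hx0 : x i = 0 := by
      by_contra hxi; exact h'.1 (by simp [hTxdef, hxi])
    exact hi (by rw [hzi, hx0, hxbsupp i h'.2, sub_zero])
  set u : Fin N → ℝ := restr S z with hudef
  have huz : ∀ i ∈ S, u i = z i := fun i hi => by simp [hudef, restr, hi]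
  have hu0 : ∀ i, i ∉ S → u i = 0 := fun i hi => by simp [hudef, restr, hi]
  have huT : ∀ i, u i ≠ 0 → i ∈ T := by
    intro i hi
    have hiS : i ∈ S := by by_contra h'; exact hi (hu0 i h')
    exact Finset.mem_union_right _ hiS
  have hRT : ∀ v : Fin N → ℝ, (∀ i, v i ≠ 0 → i ∈ T) →
      (1 - δ₁) * (l2 v) ^ 2 ≤ (l2 (A.mulVec v)) ^ 2 ∧
      (l2 (A.mulVec v)) ^ 2 ≤ (1 + δ₁) * (l2 v) ^ 2 :=
    fun v hv => hRIP₁ v (le_trans (spars_le_card v T hv) hTcard)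
  -- δ₁ is nonnegative
  have hδ₁0 : 0 ≤ δ₁ := by
    obtain ⟨g1, g2⟩ := hRT z hzT
    nlinarith [pow_pos hcpos 2]
  -- normal equations: A u ⟂ (A xb - y)
  have horth : ∑ j, A.mulVec u j * (A.mulVec xb j - y j) = 0 := by
    have step1 : ∀ j, A.mulVec u j * (A.mulVec xb j - y j)
        = ∑ i, u i * (A j i * (A.mulVec xb j - y j)) := by
      intro j
      rw [Matrix.mulVec, dotProduct, Finset.sum_mul]
      exact Finset.sum_congr rfl fun i _ => by ring
    calc ∑ j, A.mulVec u j * (A.mulVec xb j - y j)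
        = ∑ j, ∑ i, u i * (A j i * (A.mulVec xb j - y j)) :=
          Finset.sum_congr rfl fun j _ => step1 j
      _ = ∑ i, ∑ j, u i * (A j i * (A.mulVec xb j - y j)) := Finset.sum_comm
      _ = 0 := by
          apply Finset.sum_eq_zero
          intro i _
          by_cases hiS : i ∈ S
          · rw [← Finset.mul_sum, hxbls i hiS, mul_zero]
          · simp [hu0 i hiS]
  have hZe : ∀ j, A.mulVec xb j - y j = -(A.mulVec z j) - e j := by
    intro j
    have : A.mulVec z j = A.mulVec x j - A.mulVec xb j := by
      rw [hzdef, Matrix.mulVec_sub]; rfl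
    rw [this, hy]; simp; ring
  have hD : ∑ j, A.mulVec u j * A.mulVec z j = -(∑ j, A.mulVec u j * e j) := by
    have h0 : ∑ j, (-(A.mulVec u j * A.mulVec z j) - A.mulVec u j * e j) = 0 := by
      rw [← horth]
      exact Finset.sum_congr rfl fun j _ => by rw [hZe j]; ring
    rw [Finset.sum_sub_distrib, Finset.sum_neg_distrib] at h0
    linarith
  -- Cauchy-Schwarz
  have hCS : -(∑ j, A.mulVec u j * e j) ≤ l2 (A.mulVec u) * l2 e := by
    have h1 : (∑ j, A.mulVec u j * e j) ^ 2 ≤ (l2 (A.mulVec u)) ^ 2 * (l2 e) ^ 2 := by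
      rw [l2_sq, l2_sq]; exact Finset.sum_mul_sq_le_sq_mul_sq _ _ _
    nlinarith [mul_nonneg (l2_nonneg (A.mulVec u)) (l2_nonneg e),
      sq_nonneg (∑ j, A.mulVec u j * e j + l2 (A.mulVec u) * l2 e)]
  -- key claim: l2 u ≤ δ₁ * l2 z + √(1+δ₂) * l2 e
  have claim : l2 u ≤ δ₁ * l2 z + Real.sqrt (1 + δ₂) * l2 e := by
    rcases eq_or_lt_of_le (l2_nonneg u) with ha0 | hapos
    · rw [← ha0]
      have : 0 ≤ δ₁ * l2 z := mul_nonneg hδ₁0 (l2_nonneg z)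
      have : 0 ≤ Real.sqrt (1 + δ₂) * l2 e :=
        mul_nonneg (Real.sqrt_nonneg _) (l2_nonneg e)
      linarith
    · -- polarization inequality
      have hsupp1 : ∀ i, (fun i => l2 z * u i + l2 u * z i) i ≠ 0 → i ∈ T := by
        intro i hi
        by_contra h'
        have h1 : u i = 0 := by by_contra h''; exact h' (huT i h'')
        have h2 : z i = 0 := by by_contra h''; exact h' (hzT i h'')
        exact hi (by simp [h1, h2])
      have hsupp2 : ∀ i, (fun i => l2 z * u i + (-(l2 u)) * z i) i ≠ 0 → i ∈ T := by
        intro i hi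
        by_contra h'
        have h1 : u i = 0 := by by_contra h''; exact h' (huT i h'')
        have h2 : z i = 0 := by by_contra h''; exact h' (hzT i h'')
        exact hi (by simp [h1, h2])
      have hpol := polar_ineq A δ₁ u z (hRT _ hsupp1).1 (hRT _ hsupp2).2 hapos hcpos
      -- ∑ u i * z i = (l2 u)^2
      have hI : ∑ i, u i * z i = (l2 u) ^ 2 := by
        rw [l2_sq]
        apply Finset.sum_congr rfl
        intro i _
        by_cases hiS : i ∈ S
        · rw [huz i hiS]; ring
        · rw [hu0 i hiS]; ring
      -- RIP₂ bound on l2 (A u)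
      have hsparsu : spars u ≤ s₂ := by
        rw [← hS]
        exact spars_le_card u S (fun i hi => by by_contra h'; exact hi (hu0 i h'))
      have hU2 : (l2 (A.mulVec u)) ^ 2 ≤ (1 + δ₂) * (l2 u) ^ 2 := (hRIP₂ u hsparsu).2
      have hδ₂0 : 0 ≤ 1 + δ₂ := by nlinarith [sq_nonneg (l2 (A.mulVec u)), pow_pos hapos 2]
      have hUb : l2 (A.mulVec u) ≤ Real.sqrt (1 + δ₂) * l2 u := by
        have : l2 (A.mulVec u) = Real.sqrt ((l2 (A.mulVec u)) ^ 2) :=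
          (Real.sqrt_sq (l2_nonneg _)).symm
        rw [this]
        calc Real.sqrt ((l2 (A.mulVec u)) ^ 2) ≤ Real.sqrt ((1 + δ₂) * (l2 u) ^ 2) :=
              Real.sqrt_le_sqrt hU2
          _ = Real.sqrt (1 + δ₂) * l2 u := by
              rw [Real.sqrt_mul hδ₂0, Real.sqrt_sq (l2_nonneg _)]
      -- combine
      have hchain : (l2 u) ^ 2 ≤ δ₁ * l2 u * l2 z + Real.sqrt (1 + δ₂) * l2 u * l2 e := by
        have hD' : ∑ j, A.mulVec u j * A.mulVec z j ≤ Real.sqrt (1 + δ₂) * l2 u * l2 e := by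
          rw [hD]
          calc -(∑ j, A.mulVec u j * e j) ≤ l2 (A.mulVec u) * l2 e := hCS
            _ ≤ Real.sqrt (1 + δ₂) * l2 u * l2 e :=
              mul_le_mul_of_nonneg_right hUb (l2_nonneg e)
        linarith [hpol, hI.symm.le, hI.le]
      nlinarith [hchain, hapos]
  -- Pythagoras
  have hPyth : (l2 z) ^ 2 = (l2 u) ^ 2 + (l2 (restr Sᶜ x)) ^ 2 := by
    rw [l2_sq, l2_sq, l2_sq, ← Finset.sum_add_distrib]
    apply Finset.sum_congr rfl
    intro i _
    by_cases hiS : i ∈ S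
    · have : restr Sᶜ x i = 0 := by simp [restr, hiS]
      rw [this, huz i hiS]; ring
    · have h1 : restr Sᶜ x i = x i := by simp [restr, hiS]
      have h2 : z i = x i := by rw [hzi, hxbsupp i hiS, sub_zero]
      rw [h1, hu0 i hiS, h2]; ring
  have hfin := final_alg (l2 u) (l2 (restr Sᶜ x)) (l2 z)
    (Real.sqrt (1 + δ₂) * l2 e) δ₁ hδ₁0 hδ₁ (l2_nonneg _) (l2_nonneg _)
    (mul_nonneg (Real.sqrt_nonneg _) (l2_nonneg _)) (l2_nonneg _) hPyth claim
  have heq : (Real.sqrt (1 + δ₂) * l2 e) / (1 - δ₁)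
      = (Real.sqrt (1 + δ₂) / (1 - δ₁)) * l2 e := by ring
  rw [heq] at hfin
  exact hfin
end

section
/- Let x, x̂, w ∈ ℝ^N, T₀ a set of s indices, z = x̂ - x, λ ∈ (0,1], and suppose λ‖x̂‖₁ + (1-λ)‖x̂ - w‖₂ ≤ λ‖x‖₁ + (1-λ)‖x - w‖₂. Then ‖z_{T₀^c}‖₁ ≤ (1 - (1-λ)/(λ√s))‖z_{T₀}‖₁ + 2‖x_{T₀^c}‖₁ + (2(1-λ)/λ)‖x - w‖₂. -/
open Finset

lemma l1_split {n : ℕ} (S : Finset (Fin n)) (v : Fin n → ℝ) :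
    l1 v = l1 (restr S v) + l1 (restr Sᶜ v) := by
  simp only [l1, restr, ← Finset.sum_add_distrib]
  refine Finset.sum_congr rfl fun i _ => ?_
  by_cases h : i ∈ S <;> simp [h]

lemma l1_add_le {n : ℕ} (a b : Fin n → ℝ) : l1 (a + b) ≤ l1 a + l1 b := by
  simp only [l1, ← Finset.sum_add_distrib]
  exact Finset.sum_le_sum fun i _ => abs_add_le _ _

lemma l1_neg {n : ℕ} (v : Fin n → ℝ) : l1 (-v) = l1 v := by
  simp [l1]

lemma l1_nonneg {n : ℕ} (v : Fin n → ℝ) : 0 ≤ l1 v :=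
  Finset.sum_nonneg fun i _ => abs_nonneg _

lemma l1_rev {n : ℕ} (a b : Fin n → ℝ) : l1 a - l1 b ≤ l1 (a + b) := by
  have h := l1_add_le (a + b) (-b)
  have he : a + b + -b = a := by ring
  rw [he, l1_neg] at h
  linarith

lemma restr_add {n : ℕ} (S : Finset (Fin n)) (a b : Fin n → ℝ) :
    restr S (a + b) = restr S a + restr S b := by
  funext i; simp only [restr, Pi.add_apply]; split <;> simp

lemma l2_eq_norm {n : ℕ} (v : Fin n → ℝ) :
    l2 v = ‖(WithLp.equiv 2 (Fin n → ℝ)).symm v‖ := by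
  rw [EuclideanSpace.norm_eq, l2]
  congr 1; exact Finset.sum_congr rfl fun i _ => by simp [sq_abs]

lemma l2_rev {n : ℕ} (a b : Fin n → ℝ) : l2 a - l2 b ≤ l2 (a + b) := by
  simp only [l2_eq_norm]
  have hP : (WithLp.equiv 2 (Fin n → ℝ)).symm a
      = (WithLp.equiv 2 (Fin n → ℝ)).symm (a + b) - (WithLp.equiv 2 (Fin n → ℝ)).symm b := by
    show WithLp.toLp 2 a = WithLp.toLp 2 (a + b) - WithLp.toLp 2 b
    rw [← WithLp.toLp_sub]; congr 1; ring
  rw [hP]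
  have := norm_sub_le ((WithLp.equiv 2 (Fin n → ℝ)).symm (a + b))
    ((WithLp.equiv 2 (Fin n → ℝ)).symm b)
  linarith

lemma l2_restr_le {n : ℕ} (S : Finset (Fin n)) (v : Fin n → ℝ) :
    l2 (restr S v) ≤ l2 v := by
  apply Real.sqrt_le_sqrt
  refine Finset.sum_le_sum fun i _ => ?_
  by_cases h : i ∈ S <;> simp [restr, h] <;> positivity

lemma l1_le_sqrt_l2 {n : ℕ} (S : Finset (Fin n)) (v : Fin n → ℝ) :
    l1 (restr S v) ≤ Real.sqrt S.card * l2 (restr S v) := by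
  have h1 : l1 (restr S v) = ∑ i ∈ S, |v i| * 1 := by
    rw [l1, ← Finset.sum_subset (Finset.subset_univ S)]
    · exact Finset.sum_congr rfl fun i hi => by simp [restr, hi]
    · intro i _ hi; simp [restr, hi]
  have h2 : (∑ i, (restr S v i) ^ 2) = ∑ i ∈ S, |v i| ^ 2 := by
    rw [← Finset.sum_subset (Finset.subset_univ S)]
    · exact Finset.sum_congr rfl fun i hi => by simp [restr, hi, sq_abs]
    · intro i _ hi; simp [restr, hi]
  rw [h1, l2, h2]
  have h3 : (∑ i ∈ S, |v i| * 1) ^ 2 ≤ (∑ i ∈ S, |v i| ^ 2) * (∑ i ∈ S, (1:ℝ) ^ 2) :=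
    Finset.sum_mul_sq_le_sq_mul_sq S _ _
  have hnn : 0 ≤ ∑ i ∈ S, |v i| * 1 :=
    Finset.sum_nonneg fun i _ => by positivity
  calc ∑ i ∈ S, |v i| * 1 = Real.sqrt ((∑ i ∈ S, |v i| * 1) ^ 2) := (Real.sqrt_sq hnn).symm
    _ ≤ Real.sqrt ((∑ i ∈ S, |v i| ^ 2) * (∑ i ∈ S, (1:ℝ) ^ 2)) := Real.sqrt_le_sqrt h3
    _ = Real.sqrt (∑ i ∈ S, (1:ℝ) ^ 2) * Real.sqrt (∑ i ∈ S, |v i| ^ 2) := by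
        rw [Real.sqrt_mul (Finset.sum_nonneg fun i _ => by positivity), mul_comm]
    _ = Real.sqrt S.card * Real.sqrt (∑ i ∈ S, |v i| ^ 2) := by simp

/-- cone-type inequality for the ℓ2-penalty objective, any λ ∈ (0,1]. -/
theorem stmt10 {N : ℕ} (x xh w : Fin N → ℝ) (s : ℕ) (hs : 1 ≤ s)
    (T₀ : Finset (Fin N)) (hT₀ : T₀.card = s)
    (z : Fin N → ℝ) (hz : z = xh - x)
    (lam : ℝ) (hlam₁ : 0 < lam) (hlam₂ : lam ≤ 1)
    (hopt : lam * l1 xh + (1 - lam) * l2 (xh - w) ≤ lam * l1 x + (1 - lam) * l2 (x - w)) :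
    l1 (restr T₀ᶜ z) ≤ (1 - (1 - lam) / (lam * Real.sqrt s)) * l1 (restr T₀ z)
      + 2 * l1 (restr T₀ᶜ x) + (2 * (1 - lam) / lam) * l2 (x - w) := by
  have hxh : xh = x + z := by rw [hz]; ring
  set A := l1 (restr T₀ z) with hA
  set B := l1 (restr T₀ᶜ z) with hB
  set C := l1 (restr T₀ᶜ x) with hC
  set D := l2 (x - w) with hD
  set r := Real.sqrt s with hr
  have hrpos : 0 < r := Real.sqrt_pos.mpr (by exact_mod_cast hs)
  -- lower bound on l1 xh
  have h1 : l1 (restr T₀ x) - A + (B - C) ≤ l1 xh := by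
    rw [l1_split T₀ xh, hxh, restr_add, restr_add]
    have ha : l1 (restr T₀ x) - A ≤ l1 (restr T₀ x + restr T₀ z) := l1_rev _ _
    have hb : B - C ≤ l1 (restr T₀ᶜ x + restr T₀ᶜ z) := by
      have := l1_rev (restr T₀ᶜ z) (restr T₀ᶜ x)
      rw [add_comm] at this
      linarith
    linarith
  -- lower bound on l2 (xh - w)
  have h2 : A / r - D ≤ l2 (xh - w) := by
    have e : xh - w = z + (x - w) := by rw [hxh]; ring
    have h3 : l2 z - D ≤ l2 (xh - w) := by rw [e]; exact l2_rev z (x - w)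
    have h4 : l2 (restr T₀ z) ≤ l2 z := l2_restr_le T₀ z
    have h5 : A ≤ r * l2 (restr T₀ z) := by
      have := l1_le_sqrt_l2 T₀ z; rwa [hT₀] at this
    have h6 : A / r ≤ l2 (restr T₀ z) := by
      rw [div_le_iff₀ hrpos]; nlinarith
    linarith
  have hx1 : l1 x = l1 (restr T₀ x) + C := l1_split T₀ x
  have hlam3 : 0 ≤ 1 - lam := by linarith
  have k1 := mul_le_mul_of_nonneg_left h1 hlam₁.le
  have k2 := mul_le_mul_of_nonneg_left h2 hlam3
  have key : lam * (l1 (restr T₀ x) - A + (B - C)) + (1 - lam) * (A / r - D)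
      ≤ lam * (l1 (restr T₀ x) + C) + (1 - lam) * D := by
    rw [hx1] at hopt; linarith
  have key2 : lam * B ≤ lam * A - (1 - lam) * (A / r) + 2 * lam * C + 2 * (1 - lam) * D := by
    nlinarith [key]
  have hfinal := mul_le_mul_of_nonneg_left key2 (le_of_lt (one_div_pos.mpr hlam₁))
  have hBeq : (1 / lam) * (lam * B) = B := by field_simp
  have hReq : (1 / lam) * (lam * A - (1 - lam) * (A / r) + 2 * lam * C + 2 * (1 - lam) * D)
      = (1 - (1 - lam) / (lam * r)) * A + 2 * C + (2 * (1 - lam) / lam) * D := by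
    field_simp
  rw [hBeq, hReq] at hfinal
  exact hfinal
end
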